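/- arXiv:2506.16030 — 3 statements merged into one kernel-verified Lean document; each statement's English description precedes it below -/
import Mathlib

section
/- If φ : ℝ^N → ℝ is convex, twice continuously differentiable, its choice probabilities sum to one (∑_i ∇_i φ(θ) = 1 for all θ), its off-diagonal Hessian entries are nonpositive, and 2·Tr(∇²φ(θ)) ≤ L for all θ, then ∇φ is L-Lipschitz from the ℓ¹ norm to the ℓ¹ norm: ‖∇φ(θ) − ∇φ(θ')‖₁ ≤ L‖θ − θ'‖₁ for all θ, θ'. -/
/-- If `φ` is convex, `C²`, its choice probabilities (partial derivatives) sum to one,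
its off-diagonal Hessian entries are nonpositive, and twice the trace of the Hessian is
bounded by `L`, then `∇φ` is `L`-Lipschitz from the `ℓ¹` norm to the `ℓ¹` norm. -/
theorem gradient_l1_lipschitz_of_trace_bound (N : ℕ) (hN : 1 ≤ N) (L : ℝ) (hL : 0 < L)
    (φ : (Fin N → ℝ) → ℝ)
    (hconv : ConvexOn ℝ Set.univ φ)
    (hC2 : ContDiff ℝ 2 φ)
    (hsum : ∀ θ : Fin N → ℝ, ∑ i, fderiv ℝ φ θ (Pi.single i 1) = 1)
    (hoff : ∀ θ : Fin N → ℝ, ∀ i j : Fin N, i ≠ j →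
      fderiv ℝ (fun x => fderiv ℝ φ x (Pi.single i 1)) θ (Pi.single j 1) ≤ 0)
    (htr : ∀ θ : Fin N → ℝ,
      2 * ∑ i, fderiv ℝ (fun x => fderiv ℝ φ x (Pi.single i 1)) θ (Pi.single i 1) ≤ L) :
    ∀ θ θ' : Fin N → ℝ,
      ∑ j, |fderiv ℝ φ θ (Pi.single j 1) - fderiv ℝ φ θ' (Pi.single j 1)|
        ≤ L * ∑ j, |θ j - θ' j| := by
  set g : Fin N → (Fin N → ℝ) → ℝ := fun j x => fderiv ℝ φ x (Pi.single j 1) with hg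
  set H : (Fin N → ℝ) → Fin N → Fin N → ℝ :=
    fun x j i => fderiv ℝ (g j) x (Pi.single i 1) with hH
  have hdiff : ∀ j, Differentiable ℝ (g j) := by
    intro j
    have h1 : ContDiff ℝ 1 (fderiv ℝ φ) := hC2.fderiv_right (by norm_num)
    exact (h1.differentiable (by norm_num)).clm_apply (differentiable_const _)
  -- column sums of the Hessian are zero
  have hcol : ∀ x i, ∑ j, H x j i = 0 := by
    intro x i
    have hS : HasFDerivAt (fun y => ∑ j, g j y) (∑ j, fderiv ℝ (g j) x) x :=
      HasFDerivAt.fun_sum fun j _ => (hdiff j x).hasFDerivAt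
    have hconst : (fun y => ∑ j, g j y) = fun _ => (1 : ℝ) := funext fun y => hsum y
    rw [hconst] at hS
    have h0 : (∑ j, fderiv ℝ (g j) x) = 0 := hS.unique (hasFDerivAt_const 1 x)
    calc ∑ j, H x j i = (∑ j, fderiv ℝ (g j) x) (Pi.single i 1) := by
          rw [ContinuousLinearMap.sum_apply]
      _ = 0 := by rw [h0]; rfl
  have hdiag : ∀ x k, 0 ≤ H x k k := by
    intro x k
    have h0 := hcol x k
    have : H x k k = -∑ j ∈ Finset.univ.erase k, H x j k := by
      have := Finset.add_sum_erase Finset.univ (fun j => H x j k) (Finset.mem_univ k)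
      linarith [h0, this]
    rw [this]
    have : ∑ j ∈ Finset.univ.erase k, H x j k ≤ 0 :=
      Finset.sum_nonpos fun j hj => hoff x j k (Finset.ne_of_mem_erase hj)
    linarith
  -- column sums of |H| are bounded by L
  have hcolabs : ∀ x i, ∑ j, |H x j i| ≤ L := by
    intro x i
    have key : ∑ j, |H x j i| = 2 * H x i i := by
      have : ∀ j, |H x j i| = (if j = i then 2 * H x i i else 0) - H x j i := by
        intro j
        by_cases hji : j = i
        · subst hji; rw [abs_of_nonneg (hdiag x j)]; simp; ring
        · rw [abs_of_nonpos (hoff x j i hji)]; simp [hji]; rfl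
      rw [Finset.sum_congr rfl fun j _ => this j, Finset.sum_sub_distrib, hcol x i,
        Finset.sum_ite_eq' Finset.univ i (fun _ => 2 * H x i i)]
      simp
    rw [key]
    have h1 : H x i i ≤ ∑ k, H x k k :=
      Finset.single_le_sum (fun k _ => hdiag x k) (Finset.mem_univ i)
    have h2 := htr x
    have : ∑ k, H x k k = ∑ k, fderiv ℝ (fun y => fderiv ℝ φ y (Pi.single k 1)) x
        (Pi.single k 1) := rfl
    linarith [h2, h1]
  intro θ θ'
  set v : Fin N → ℝ := θ - θ' with hv
  set ε : Fin N → ℝ := fun j => if 0 ≤ g j θ - g j θ' then 1 else -1 with hε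
  have hεabs : ∀ j, |ε j| = 1 := by
    intro j; simp only [hε]; split_ifs <;> simp
  have hεmul : ∀ j, ε j * (g j θ - g j θ') = |g j θ - g j θ'| := by
    intro j
    simp only [hε]
    by_cases h : 0 ≤ g j θ - g j θ'
    · rw [if_pos h, one_mul, abs_of_nonneg h]
    · rw [if_neg h, abs_of_neg (not_le.mp h)]; ring
  set F : ℝ → ℝ := fun t => ∑ j, ε j * g j (θ' + t • v) with hF
  set M : ℝ := L * ∑ i, |v i| with hM
  -- derivative of F
  have hFd : ∀ t : ℝ, HasDerivAt F
      (∑ j, ε j * (fderiv ℝ (g j) (θ' + t • v)) v) t := by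
    intro t
    apply HasDerivAt.fun_sum
    intro j _
    have hline : HasDerivAt (fun s : ℝ => θ' + s • v) v t := by
      simpa using ((hasDerivAt_id t).smul_const v).const_add θ'
    exact (((hdiff j (θ' + t • v)).hasFDerivAt.comp_hasDerivAt t hline)).const_mul (ε j)
  -- bound on the derivative
  have hFd_bound : ∀ t : ℝ, |∑ j, ε j * (fderiv ℝ (g j) (θ' + t • v)) v| ≤ M := by
    intro t
    set x := θ' + t • v
    have hDv : ∀ j, (fderiv ℝ (g j) x) v = ∑ i, v i * H x j i := by
      intro j
      have hvrepr : v = ∑ i, v i • (Pi.single i 1 : Fin N → ℝ) := by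
        funext k
        simp [Finset.sum_apply, Pi.single_apply]
      conv_lhs => rw [hvrepr]
      rw [map_sum]
      exact Finset.sum_congr rfl fun i _ => by rw [map_smul]; rfl
    calc |∑ j, ε j * (fderiv ℝ (g j) x) v|
        ≤ ∑ j, |ε j * (fderiv ℝ (g j) x) v| := Finset.abs_sum_le_sum_abs _ _
      _ = ∑ j, |(fderiv ℝ (g j) x) v| := by
          refine Finset.sum_congr rfl fun j _ => ?_
          rw [abs_mul, hεabs j, one_mul]
      _ ≤ ∑ j, ∑ i, |v i| * |H x j i| := by
          refine Finset.sum_le_sum fun j _ => ?_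
          rw [hDv j]
          calc |∑ i, v i * H x j i| ≤ ∑ i, |v i * H x j i| :=
                Finset.abs_sum_le_sum_abs _ _
            _ = ∑ i, |v i| * |H x j i| := by simp [abs_mul]
      _ = ∑ i, |v i| * ∑ j, |H x j i| := by
          rw [Finset.sum_comm]
          exact Finset.sum_congr rfl fun i _ => by rw [Finset.mul_sum]
      _ ≤ ∑ i, |v i| * L := by
          refine Finset.sum_le_sum fun i _ => ?_
          exact mul_le_mul_of_nonneg_left (hcolabs x i) (abs_nonneg _)
      _ = M := by rw [hM, Finset.mul_sum]; exact Finset.sum_congr rfl fun i _ => mul_comm _ _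
  -- mean value inequality on [0,1]
  have hmvt : ‖F 1 - F 0‖ ≤ M * (1 - 0) := by
    apply norm_image_sub_le_of_norm_deriv_le_segment'
      (f' := fun t => ∑ j, ε j * (fderiv ℝ (g j) (θ' + t • v)) v)
    · intro t _
      exact (hFd t).hasDerivWithinAt
    · intro t _
      simpa using hFd_bound t
    · exact Set.right_mem_Icc.mpr zero_le_one
  have hF1 : F 1 - F 0 = ∑ j, |g j θ - g j θ'| := by
    have h1 : θ' + (1 : ℝ) • v = θ := by funext k; simp [hv]
    have h0 : θ' + (0 : ℝ) • v = θ' := by funext k; simp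
    rw [hF]
    simp only [h1, h0]
    rw [← Finset.sum_sub_distrib]
    refine Finset.sum_congr rfl fun j _ => ?_
    rw [← mul_sub, hεmul j]
  have : ∑ j, |g j θ - g j θ'| ≤ M := by
    rw [← hF1]
    calc F 1 - F 0 ≤ |F 1 - F 0| := le_abs_self _
      _ ≤ M * (1 - 0) := hmvt
      _ = M := by ring
  simpa [hM, hv] using this
end

section
/- Regret bound for the gradient-based (Social Surplus) algorithm: let φ : ℝ^N → ℝ be convex and differentiable with φ(θ) ≥ max_j θ_j for all θ, and assume the Bregman divergence satisfies D_φ(θ_t ‖ θ_{t−1}) ≤ B for all t, where θ_t = ∑_{s≤t} u_s. Then, with decisions x_t = ∇φ(θ_{t−1}), the regret satisfies max_{x ∈ Δ_N} ⟨θ_T, x⟩ − ∑_{t=1}^T ⟨u_t, x_t⟩ ≤ φ(0) + T·B. -/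
/-- Regret bound for the Social Surplus Algorithm: with `φ` convex and differentiable,
`φ(θ) ≥ max_j θ_j`, gradients lying in the simplex, and per-step Bregman divergences
bounded by `B`, the regret of the decisions `x_t = ∇φ(θ_{t−1})` is at most `φ(0) + T·B`. -/
theorem ssa_regret_bound (N T : ℕ) (hN : 1 ≤ N) (hT : 1 ≤ T) (B : ℝ)
    (φ : (Fin N → ℝ) → ℝ) (hconv : ConvexOn ℝ Set.univ φ) (hdiff : Differentiable ℝ φ)
    (hsimplex : ∀ θ : Fin N → ℝ,
      (∀ j, 0 ≤ fderiv ℝ φ θ (Pi.single j 1)) ∧ ∑ j, fderiv ℝ φ θ (Pi.single j 1) = 1)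
    (hmax : ∀ (θ : Fin N → ℝ) (j : Fin N), θ j ≤ φ θ)
    (u θ : ℕ → Fin N → ℝ) (hθ0 : θ 0 = 0) (hθ : ∀ t, θ (t + 1) = u (t + 1) + θ t)
    (hB : ∀ t ∈ Finset.Icc 1 T,
      φ (θ t) - φ (θ (t - 1)) - fderiv ℝ φ (θ (t - 1)) (θ t - θ (t - 1)) ≤ B) :
    ∀ x : Fin N → ℝ, (∀ j, 0 ≤ x j) → (∑ j, x j = 1) →
      (∑ j, θ T j * x j) - ∑ t ∈ Finset.Icc 1 T,
          (∑ j, u t j * fderiv ℝ φ (θ (t - 1)) (Pi.single j 1))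
        ≤ φ 0 + T * B := by
  intro x hx hsum
  -- linearity of the derivative
  have hlin : ∀ (s : ℕ) (v : Fin N → ℝ),
      fderiv ℝ φ (θ s) v = ∑ j, v j * fderiv ℝ φ (θ s) (Pi.single j 1) := by
    intro s v
    have hv : v = ∑ j, v j • (Pi.single j 1 : Fin N → ℝ) := by
      funext k
      simp [Finset.sum_apply, Pi.single_apply]
    conv_lhs => rw [hv]
    rw [map_sum]
    simp [smul_eq_mul]
  -- step 1 : ⟨θ_T, x⟩ ≤ φ(θ_T)
  have h1 : (∑ j, θ T j * x j) ≤ φ (θ T) := by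
    calc (∑ j, θ T j * x j) ≤ ∑ j, φ (θ T) * x j := by
          exact Finset.sum_le_sum fun j _ =>
            mul_le_mul_of_nonneg_right (hmax _ j) (hx j)
      _ = φ (θ T) * ∑ j, x j := by rw [Finset.mul_sum]
      _ = φ (θ T) := by rw [hsum, mul_one]
  -- step 2 : telescoping
  have h2 : ∀ n : ℕ, φ (θ n) = φ (θ 0) + ∑ t ∈ Finset.Icc 1 n, (φ (θ t) - φ (θ (t - 1))) := by
    intro n
    induction n with
    | zero => simp
    | succ n ih =>
        rw [Finset.sum_Icc_succ_top (by omega : 1 ≤ n + 1)]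
        simp only [Nat.add_sub_cancel]
        rw [← add_assoc, ← ih]
        ring
  -- step 3 : bound each increment
  have h3 : ∑ t ∈ Finset.Icc 1 T, (φ (θ t) - φ (θ (t - 1)))
      ≤ ∑ t ∈ Finset.Icc 1 T,
          ((∑ j, u t j * fderiv ℝ φ (θ (t - 1)) (Pi.single j 1)) + B) := by
    refine Finset.sum_le_sum fun t ht => ?_
    have ht1 : 1 ≤ t := (Finset.mem_Icc.mp ht).1
    obtain ⟨s, rfl⟩ : ∃ s, t = s + 1 := ⟨t - 1, by omega⟩
    have hu : θ (s + 1) - θ (s + 1 - 1) = u (s + 1) := by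
      simp only [Nat.add_sub_cancel, hθ s]; abel
    have := hB (s + 1) ht
    rw [hu, hlin] at this
    linarith
  have hcard : ((Finset.Icc 1 T).card : ℝ) = T := by
    rw [Nat.card_Icc]; simp
  rw [Finset.sum_add_distrib, Finset.sum_const, nsmul_eq_mul, hcard] at h3
  have := h2 T
  rw [hθ0] at this
  linarith
end

section
/- S-step moving average prediction error bound: for any sequence u_0, u_1, …, u_T in a normed space (with u_t = u_0 for t < 0) and β_t = (1/S)·∑_{τ=t−S}^{t−1} u_τ, one has ∑_{t=1}^T ‖u_t − β_t‖² ≤ S²·∑_{t=1}^T ‖u_t − u_{t−1}‖². -/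
open Finset

private lemma tele_sum_nat {V : Type*} [NormedAddCommGroup V] (u : ℤ → V) (a : ℤ) :
    ∀ n : ℕ, ∑ s ∈ Finset.Icc (a + 1) (a + n), (u s - u (s - 1)) = u (a + n) - u a := by
  intro n
  induction n with
  | zero => simp
  | succ n ih =>
    have hins : Finset.Icc (a + 1) (a + (n + 1 : ℕ)) =
        insert (a + n + 1) (Finset.Icc (a + 1) (a + n)) := by
      ext x; simp only [Finset.mem_Icc, Finset.mem_insert]; push_cast; omega
    rw [hins, Finset.sum_insert (by simp), ih]
    have h1 : (a + n + 1 - 1 : ℤ) = a + n := by ring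
    have h2 : (a + (n + 1 : ℕ) : ℤ) = a + n + 1 := by push_cast; ring
    rw [h1, h2]; abel

private lemma tele_sum {V : Type*} [NormedAddCommGroup V] (u : ℤ → V) (a : ℤ) :
    ∀ b, a ≤ b → ∑ s ∈ Finset.Icc (a + 1) b, (u s - u (s - 1)) = u b - u a := by
  intro b hb
  have hb' : b = a + ((b - a).toNat : ℤ) := by omega
  rw [hb']
  exact tele_sum_nat u a (b - a).toNat

/-- S-step moving average prediction error bound: for a sequence `u` in a normed space
(constantly `u 0` for nonpositive indices) and `β_t = (1/S)·∑_{τ=t−S}^{t−1} u τ`,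
`∑_{t=1}^T ‖u_t − β_t‖² ≤ S²·∑_{t=1}^T ‖u_t − u_{t−1}‖²`. -/
theorem moving_average_error_bound (V : Type*) [NormedAddCommGroup V] [NormedSpace ℝ V]
    (S T : ℕ) (hS : 1 ≤ S) (hT : 1 ≤ T) (u : ℤ → V)
    (h0 : ∀ t : ℤ, t ≤ 0 → u t = u 0) :
    ∑ t ∈ Finset.Icc (1 : ℤ) T,
        ‖u t - (S : ℝ)⁻¹ • ∑ τ ∈ Finset.Icc (t - S) (t - 1), u τ‖ ^ 2
      ≤ (S : ℝ) ^ 2 * ∑ t ∈ Finset.Icc (1 : ℤ) T, ‖u t - u (t - 1)‖ ^ 2 := by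
  have hSpos : (0 : ℝ) < (S : ℝ) := by exact_mod_cast Nat.lt_of_lt_of_le Nat.zero_lt_one hS
  set d : ℤ → ℝ := fun s => ‖u s - u (s - 1)‖ with hd
  have hdnn : ∀ s, 0 ≤ d s := fun s => norm_nonneg _
  have hd0 : ∀ s : ℤ, s ≤ 0 → d s = 0 := by
    intro s hs
    simp only [hd]
    rw [h0 s hs, h0 (s - 1) (by omega), sub_self, norm_zero]
  -- Step 1: pointwise bound
  have pb : ∀ t ∈ Finset.Icc (1 : ℤ) T,
      ‖u t - (S : ℝ)⁻¹ • ∑ τ ∈ Finset.Icc (t - S) (t - 1), u τ‖ ^ 2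
        ≤ (S : ℝ) * ∑ s ∈ Finset.Icc (t - S + 1) t, d s ^ 2 := by
    intro t _
    have hcard : (Finset.Icc (t - S) (t - 1)).card = S := by
      rw [Int.card_Icc]; omega
    have hcard' : (Finset.Icc (t - S + 1) t).card = S := by
      rw [Int.card_Icc]; omega
    set W := ∑ s ∈ Finset.Icc (t - S + 1) t, d s with hW
    have hWnn : 0 ≤ W := Finset.sum_nonneg fun s _ => hdnn s
    have key : ‖u t - (S : ℝ)⁻¹ • ∑ τ ∈ Finset.Icc (t - S) (t - 1), u τ‖ ≤ W := by
      have heq : u t - (S : ℝ)⁻¹ • ∑ τ ∈ Finset.Icc (t - S) (t - 1), u τ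
          = (S : ℝ)⁻¹ • ∑ τ ∈ Finset.Icc (t - S) (t - 1), (u t - u τ) := by
        rw [Finset.sum_sub_distrib, smul_sub, Finset.sum_const, hcard,
          ← Nat.cast_smul_eq_nsmul ℝ, smul_smul, inv_mul_cancel₀ (ne_of_gt hSpos), one_smul]
      rw [heq, norm_smul, norm_inv, Real.norm_natCast]
      have hbound : ‖∑ τ ∈ Finset.Icc (t - S) (t - 1), (u t - u τ)‖ ≤ (S : ℝ) * W := by
        calc ‖∑ τ ∈ Finset.Icc (t - S) (t - 1), (u t - u τ)‖
            ≤ ∑ τ ∈ Finset.Icc (t - S) (t - 1), ‖u t - u τ‖ := norm_sum_le _ _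
          _ ≤ ∑ τ ∈ Finset.Icc (t - S) (t - 1), W := by
              apply Finset.sum_le_sum
              intro τ hτ
              rw [Finset.mem_Icc] at hτ
              have htele : u t - u τ = ∑ s ∈ Finset.Icc (τ + 1) t, (u s - u (s - 1)) :=
                (tele_sum u τ t (by omega)).symm
              rw [htele]
              calc ‖∑ s ∈ Finset.Icc (τ + 1) t, (u s - u (s - 1))‖
                  ≤ ∑ s ∈ Finset.Icc (τ + 1) t, d s := norm_sum_le _ _
                _ ≤ W := Finset.sum_le_sum_of_subset_of_nonneg
                    (Finset.Icc_subset_Icc_left (by omega)) (fun s _ _ => hdnn s)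
          _ = (S : ℝ) * W := by rw [Finset.sum_const, hcard, nsmul_eq_mul]
      calc (S : ℝ)⁻¹ * ‖∑ τ ∈ Finset.Icc (t - S) (t - 1), (u t - u τ)‖
          ≤ (S : ℝ)⁻¹ * ((S : ℝ) * W) := by
            apply mul_le_mul_of_nonneg_left hbound (by positivity)
        _ = W := by field_simp
    calc ‖u t - (S : ℝ)⁻¹ • ∑ τ ∈ Finset.Icc (t - S) (t - 1), u τ‖ ^ 2
        ≤ W ^ 2 := pow_le_pow_left₀ (norm_nonneg _) key 2
      _ ≤ (Finset.Icc (t - S + 1) t).card * ∑ s ∈ Finset.Icc (t - S + 1) t, d s ^ 2 :=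
          sq_sum_le_card_mul_sum_sq
      _ = (S : ℝ) * ∑ s ∈ Finset.Icc (t - S + 1) t, d s ^ 2 := by rw [hcard']
  -- Combine
  calc ∑ t ∈ Finset.Icc (1 : ℤ) T,
        ‖u t - (S : ℝ)⁻¹ • ∑ τ ∈ Finset.Icc (t - S) (t - 1), u τ‖ ^ 2
      ≤ ∑ t ∈ Finset.Icc (1 : ℤ) T, (S : ℝ) * ∑ s ∈ Finset.Icc (t - S + 1) t, d s ^ 2 :=
        Finset.sum_le_sum pb
    _ = (S : ℝ) * ∑ t ∈ Finset.Icc (1 : ℤ) T, ∑ s ∈ Finset.Icc (t - S + 1) t, d s ^ 2 := by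
        rw [Finset.mul_sum]
    _ ≤ (S : ℝ) * ((S : ℝ) * ∑ s ∈ Finset.Icc (1 : ℤ) T, d s ^ 2) := by
        apply mul_le_mul_of_nonneg_left _ (le_of_lt hSpos)
        -- rewrite each inner sum as an indicator sum over Icc 1 T
        have eq1 : ∀ t ∈ Finset.Icc (1 : ℤ) T,
            ∑ s ∈ Finset.Icc (t - S + 1) t, d s ^ 2
              = ∑ s ∈ Finset.Icc (1 : ℤ) T,
                  (if s ∈ Finset.Icc (t - S + 1) t then d s ^ 2 else 0) := by
          intro t ht
          rw [Finset.mem_Icc] at ht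
          rw [Finset.sum_ite_mem]
          apply (Finset.sum_subset Finset.inter_subset_right _).symm
          intro s hs hns
          rw [Finset.mem_Icc] at hs
          have : s ≤ 0 := by
            by_contra h
            exact hns (Finset.mem_inter.mpr ⟨Finset.mem_Icc.mpr ⟨by omega, by omega⟩,
              Finset.mem_Icc.mpr hs⟩)
          rw [hd0 s this]; ring
        rw [Finset.sum_congr rfl eq1, Finset.sum_comm, Finset.mul_sum]
        apply Finset.sum_le_sum
        intro s _
        have hcond : ∀ t : ℤ, (s ∈ Finset.Icc (t - S + 1) t) ↔ (t ∈ Finset.Icc s (s + S - 1)) := by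
          intro t; simp only [Finset.mem_Icc]; omega
        calc ∑ t ∈ Finset.Icc (1 : ℤ) T, (if s ∈ Finset.Icc (t - S + 1) t then d s ^ 2 else 0)
            = ∑ t ∈ Finset.Icc (1 : ℤ) T, (if t ∈ Finset.Icc s (s + S - 1) then d s ^ 2 else 0) := by
              apply Finset.sum_congr rfl; intro t _; rw [if_congr (hcond t) rfl rfl]
          _ = (Finset.Icc (1 : ℤ) T ∩ Finset.Icc s (s + S - 1)).card * d s ^ 2 := by
              rw [Finset.sum_ite_mem, Finset.sum_const, nsmul_eq_mul]
          _ ≤ (S : ℝ) * d s ^ 2 := by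
              apply mul_le_mul_of_nonneg_right _ (by positivity)
              have h1 : (Finset.Icc (1 : ℤ) T ∩ Finset.Icc s (s + S - 1)).card
                  ≤ (Finset.Icc s (s + S - 1)).card :=
                Finset.card_le_card Finset.inter_subset_right
              have h2 : (Finset.Icc s (s + S - 1)).card = S := by rw [Int.card_Icc]; omega
              exact_mod_cast h1.trans_eq h2
    _ = (S : ℝ) ^ 2 * ∑ t ∈ Finset.Icc (1 : ℤ) T, ‖u t - u (t - 1)‖ ^ 2 := by
        simp only [hd]; ring
end
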